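/- Let μ, ν be probability measures on ℝ with finite first moment having the same mean, and let π ∈ Π(μ,ν). For u ∈ [0,1] set G(u) = ∫_ℝ y π_{F_μ^{-1}(u)}(dy), Δ₊(u) = ∫_0^u (F_μ^{-1} − G)⁺(v) dv and Δ₋(u) = ∫_0^u (F_μ^{-1} − G)⁻(v) dv. Then π satisfies the barycentre dispersion assumption if and only if Δ₊(u) ≥ Δ₋(u) for all u ∈ [0,1]. -/

import Mathlib

open MeasureTheory ProbabilityTheory Set Filter

noncomputable section

/-- Lebesgue measure restricted to `(0,1)`. -/
def lam01 : Measure ℝ := volume.restrict (Set.Ioo 0 1)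

/-- Cumulative distribution function `F_η(x) = η((-∞, x])`. -/
def Fcdf (η : Measure ℝ) (x : ℝ) : ℝ := (η (Set.Iic x)).toReal

/-- Left limit of the cumulative distribution function, `F_η(x-) = η((-∞, x))`. -/
def FcdfL (η : Measure ℝ) (x : ℝ) : ℝ := (η (Set.Iio x)).toReal

/-- Quantile function `F_η^{-1}(u) = inf {x : F_η(x) ≥ u}`. -/
def qf (η : Measure ℝ) (u : ℝ) : ℝ := sInf {x | u ≤ Fcdf η x}

/-- `π` is a coupling between `μ` and `ν`. -/
def IsCoupling (π : Measure (ℝ × ℝ)) (μ ν : Measure ℝ) : Prop :=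
  π.map Prod.fst = μ ∧ π.map Prod.snd = ν

/-- `W_ρ^ρ(η, η')`, the Wasserstein distance of order `ρ` raised to the power `ρ`. -/
def Wr (ρ : ℝ) (η η' : Measure ℝ) : ℝ :=
  sInf {c | ∃ π : Measure (ℝ × ℝ), IsCoupling π η η' ∧ c = ∫ p, |p.1 - p.2| ^ ρ ∂π}

/-- The Wasserstein distance of order `ρ`. -/
def W (ρ : ℝ) (η η' : Measure ℝ) : ℝ := Wr ρ η η' ^ (1 / ρ)

/-- The stochastic order `η ≤_st η'`: the quantile functions are ordered on `(0,1)`. -/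
def StochOrder (η η' : Measure ℝ) : Prop := ∀ u ∈ Set.Ioo (0 : ℝ) 1, qf η u ≤ qf η' u

/-- The convex order `μ ≤_cx ν`: `∫ f dμ ≤ ∫ f dν` for every (integrable) convex `f`. -/
def ConvexOrder (μ ν : Measure ℝ) : Prop :=
  ∀ f : ℝ → ℝ, ConvexOn ℝ Set.univ f → Integrable f μ → Integrable f ν →
    ∫ x, f x ∂μ ≤ ∫ x, f x ∂ν

/-- `AW_ρ^ρ(π, π')`, the adapted Wasserstein distance of order `ρ` raised to the power `ρ`:
the infimum over couplings `χ` between the first marginals of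
`∫ (|x-x'|^ρ + W_ρ^ρ(π_x, π'_{x'})) dχ`, where `κ, κ'` are disintegration kernels of `π, π'`. -/
def AWr (ρ : ℝ) (π π' : Measure (ℝ × ℝ)) : ℝ :=
  sInf {c | ∃ (χ : Measure (ℝ × ℝ)) (κ κ' : Kernel ℝ ℝ),
      IsCoupling χ (π.map Prod.fst) (π'.map Prod.fst) ∧
      π = (π.map Prod.fst).compProd κ ∧ π' = (π'.map Prod.fst).compProd κ' ∧
      c = ∫ q, (|q.1 - q.2| ^ ρ + Wr ρ (κ q.1) (κ' q.2)) ∂χ}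

/-- The adapted Wasserstein distance of order `ρ`. -/
def AW (ρ : ℝ) (π π' : Measure (ℝ × ℝ)) : ℝ := AWr ρ π π' ^ (1 / ρ)

/-- The lifted adapted Wasserstein distance of order `ρ`, raised to the power `ρ`, between the
lifted couplings with first marginals `μ, μ'` and kernels `p, p'`. -/
def lAWr (ρ : ℝ) (μ : Measure ℝ) (p : ℝ → Measure ℝ) (μ' : Measure ℝ)
    (p' : ℝ → Measure ℝ) : ℝ :=
  sInf {c | ∃ χ : Measure (ℝ × ℝ), IsCoupling χ lam01 lam01 ∧
      c = ∫ q, (|q.1 - q.2| ^ ρ + |qf μ q.1 - qf μ' q.2| ^ ρ + Wr ρ (p q.1) (p' q.2)) ∂χ}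

/-- The probability kernel `p` encodes a lifted coupling
`λ_{(0,1)}(du) δ_{F_μ^{-1}(u)}(dx) p_u(dy)` between `μ` and `ν`. -/
def IsLiftedCoupling (μ ν : Measure ℝ) (p : ℝ → Measure ℝ) : Prop :=
  Measurable p ∧ (∀ u, IsProbabilityMeasure (p u)) ∧ lam01.bind p = ν

/-- The probability kernel `m` encodes a lifted martingale coupling between `μ` and `ν`. -/
def IsLiftedMartingale (μ ν : Measure ℝ) (m : ℝ → Measure ℝ) : Prop :=
  IsLiftedCoupling μ ν m ∧ ∀ᵐ u ∂lam01, (∫ y, y ∂(m u)) = qf μ u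

end

section Aux
variable (μ : Measure ℝ) [IsProbabilityMeasure μ]

lemma Fcdf_eq_cdf : Fcdf μ = cdf μ := by
  funext x; rw [Fcdf, cdf_eq_real]; rfl

lemma Fcdf_mono : Monotone (Fcdf μ) := by rw [Fcdf_eq_cdf]; exact (cdf μ).mono

variable {μ}

lemma qfS_nonempty {u : ℝ} (hu : u < 1) : {x | u ≤ Fcdf μ x}.Nonempty := by
  obtain ⟨x, hx⟩ := ((tendsto_cdf_atTop μ).eventually_const_le hu).exists
  exact ⟨x, by rw [Set.mem_setOf_eq, Fcdf_eq_cdf]; exact hx⟩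

lemma qfS_bddBelow {u : ℝ} (hu : 0 < u) : BddBelow {x | u ≤ Fcdf μ x} := by
  obtain ⟨x0, hx0⟩ := ((tendsto_cdf_atBot μ).eventually_lt_const hu).exists
  refine ⟨x0, fun x hx => ?_⟩
  by_contra h
  push_neg at h
  have : Fcdf μ x ≤ Fcdf μ x0 := Fcdf_mono μ h.le
  rw [Fcdf_eq_cdf] at this hx
  exact absurd (le_trans hx this) (not_le.2 hx0)

lemma le_Fcdf_qf {u : ℝ} (hu : u ∈ Set.Ioo (0:ℝ) 1) : u ≤ Fcdf μ (qf μ u) := by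
  set S := {x | u ≤ Fcdf μ x} with hS
  have hne := qfS_nonempty (μ := μ) hu.2
  have hbdd := qfS_bddBelow (μ := μ) hu.1
  have hmem : ∀ x, qf μ x = sInf {y | x ≤ Fcdf μ y} := fun _ => rfl
  -- every x > sInf S is in S
  have hup : ∀ x, qf μ u < x → u ≤ Fcdf μ x := by
    intro x hx
    obtain ⟨s, hs, hsx⟩ := exists_lt_of_csInf_lt hne hx
    exact le_trans hs (Fcdf_mono μ hsx.le)
  rw [Fcdf_eq_cdf]
  have hrc : ContinuousWithinAt (cdf μ) (Set.Ioi (qf μ u)) (qf μ u) :=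
    ((cdf μ).right_continuous _).mono Set.Ioi_subset_Ici_self
  refine ge_of_tendsto hrc ?_
  filter_upwards [self_mem_nhdsWithin] with x hx
  have := hup x hx
  rwa [Fcdf_eq_cdf] at this

lemma qf_le_iff {u x : ℝ} (hu : u ∈ Set.Ioo (0:ℝ) 1) : qf μ u ≤ x ↔ u ≤ Fcdf μ x := by
  constructor
  · intro h
    exact le_trans (le_Fcdf_qf hu) (Fcdf_mono μ h)
  · intro h
    exact csInf_le (qfS_bddBelow hu.1) h

lemma qf_monoOn : MonotoneOn (qf μ) (Set.Ioo 0 1) := by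
  intro u hu v hv huv
  exact csInf_le_csInf (qfS_bddBelow hu.1) ⟨_, le_Fcdf_qf hv⟩
    (fun x hx => le_trans huv hx)

instance : IsProbabilityMeasure lam01 :=
  ⟨by rw [lam01, Measure.restrict_apply MeasurableSet.univ, Set.univ_inter, Real.volume_Ioo]; norm_num⟩

lemma qf_aemeasurable : AEMeasurable (qf μ) lam01 :=
  aemeasurable_restrict_of_monotoneOn measurableSet_Ioo qf_monoOn

lemma map_qf : lam01.map (qf μ) = μ := by
  have ham := qf_aemeasurable (μ := μ)
  have : IsProbabilityMeasure (lam01.map (qf μ)) := Measure.isProbabilityMeasure_map ham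
  refine Measure.ext_of_Iic _ _ (fun x => ?_)
  rw [Measure.map_apply_of_aemeasurable ham measurableSet_Iic, lam01,
    Measure.restrict_apply' measurableSet_Ioo]
  have hset : qf μ ⁻¹' Set.Iic x ∩ Set.Ioo 0 1 = Set.Iic (Fcdf μ x) ∩ Set.Ioo 0 1 := by
    ext u
    simp only [Set.mem_inter_iff, Set.mem_preimage, Set.mem_Iic, and_congr_left_iff]
    intro hu
    exact qf_le_iff hu
  rw [hset]
  have hF0 : 0 ≤ Fcdf μ x := ENNReal.toReal_nonneg
  have hF1 : Fcdf μ x ≤ 1 := by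
    rw [Fcdf]
    exact ENNReal.toReal_le_of_le_ofReal one_pos.le (by simpa using prob_le_one)
  have hμx : μ (Set.Iic x) = ENNReal.ofReal (Fcdf μ x) := by
    rw [Fcdf, ENNReal.ofReal_toReal (measure_ne_top μ _)]
  rcases lt_or_eq_of_le hF1 with h1 | h1
  · have : Set.Iic (Fcdf μ x) ∩ Set.Ioo 0 1 = Set.Ioc 0 (Fcdf μ x) := by
      ext u
      simp only [Set.mem_inter_iff, Set.mem_Iic, Set.mem_Ioo, Set.mem_Ioc]
      constructor
      · rintro ⟨h, h0, _⟩; exact ⟨h0, h⟩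
      · rintro ⟨h0, h⟩; exact ⟨h, h0, lt_of_le_of_lt h h1⟩
    rw [this, Real.volume_Ioc, hμx, sub_zero]
  · have : Set.Iic (Fcdf μ x) ∩ Set.Ioo 0 1 = Set.Ioo 0 1 := by
      rw [Set.inter_eq_right]
      intro u hu
      rw [Set.mem_Iic, h1]
      exact hu.2.le
    rw [this, Real.volume_Ioo, hμx, h1]
    norm_num

end Aux

section Main
open Topology

lemma ae_ne_pt (a : ℝ) : ∀ᵐ v : ℝ ∂(volume : Measure ℝ), v ≠ a := by
  rw [Filter.eventually_iff, mem_ae_iff]; simp [measure_singleton]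

lemma bdd_insert_one {s : Set ℝ} (hs : s ⊆ Set.Ioo 0 1) : BddBelow (insert (1:ℝ) s) := by
  refine ⟨0, ?_⟩
  rintro b (rfl | hb)
  · norm_num
  · exact (hs hb).1.le

/-- for `μ, ν` with the same mean and `π = μ ⊗ κ ∈ Π(μ,ν)`, the barycentre
dispersion assumption is equivalent to `Δ₊(u) ≥ Δ₋(u)` for all `u ∈ [0,1]`, where
`G(u) = ∫ y π_{F_μ^{-1}(u)}(dy)`, `Δ₊(u) = ∫_0^u (F_μ^{-1} - G)⁺` and
`Δ₋(u) = ∫_0^u (F_μ^{-1} - G)⁻`. -/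
theorem stmt5
    (μ ν : Measure ℝ) [IsProbabilityMeasure μ] [IsProbabilityMeasure ν]
    (hμ1 : Integrable (fun x => |x|) μ) (hν1 : Integrable (fun x => |x|) ν)
    (hmean : (∫ x, x ∂μ) = ∫ y, y ∂ν)
    (κ : Kernel ℝ ℝ) [IsMarkovKernel κ]
    (π : Measure (ℝ × ℝ)) (hπd : π = μ.compProd κ) (hπ : IsCoupling π μ ν)
    (G Δp Δm : ℝ → ℝ)
    (hG : ∀ u : ℝ, G u = ∫ y, y ∂(κ (qf μ u)))
    (hΔp : ∀ u : ℝ, Δp u = ∫ v in (0 : ℝ)..u, max (qf μ v - G v) 0)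
    (hΔm : ∀ u : ℝ, Δm u = ∫ v in (0 : ℝ)..u, max (G v - qf μ v) 0) :
    (∀ a : ℝ, ∫ x in Set.Ici a, (x - ∫ y, y ∂(κ x)) ∂μ ≤ 0) ↔
      (∀ u ∈ Set.Icc (0 : ℝ) 1, Δm u ≤ Δp u) := by
  set bar : ℝ → ℝ := fun x => ∫ y, y ∂(κ x) with hbar_def
  have hbar_sm : StronglyMeasurable bar :=
    MeasureTheory.StronglyMeasurable.integral_kernel_prod_right
      (f := fun _ y => y) measurable_snd.stronglyMeasurable
  have hq_ae : AEMeasurable (qf μ) lam01 := qf_aemeasurable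
  have hmapq : lam01.map (qf μ) = μ := map_qf
  have hid_μ : Integrable (fun x : ℝ => x) μ :=
    hμ1.mono' aestronglyMeasurable_id (by filter_upwards with x; simp)
  have hq_int : Integrable (qf μ) lam01 := by
    rw [← hmapq] at hid_μ
    exact (integrable_map_measure aestronglyMeasurable_id hq_ae).mp hid_μ
  have hsnd_int : Integrable (fun p : ℝ × ℝ => p.2) π := by
    have hidν : Integrable (fun y : ℝ => y) ν :=
      hν1.mono' aestronglyMeasurable_id (by filter_upwards with x; simp)
    rw [← hπ.2] at hidν
    exact (integrable_map_measure aestronglyMeasurable_id measurable_snd.aemeasurable).mp hidν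
  have hsndc : Integrable (fun p : ℝ × ℝ => p.2) (μ.compProd κ) := hπd ▸ hsnd_int
  have hbar_norm_int : Integrable (fun x => ∫ y, ‖y‖ ∂κ x) μ :=
    ((Measure.integrable_compProd_iff hsndc.aestronglyMeasurable).mp hsndc).2
  have hbar_int : Integrable bar μ :=
    hbar_norm_int.mono' hbar_sm.aestronglyMeasurable
      (by filter_upwards with x; exact norm_integral_le_integral_norm _)
  have hG_eq : G = fun u => bar (qf μ u) := funext hG
  have hG_int : Integrable G lam01 := by
    rw [hG_eq]
    rw [← hmapq] at hbar_int
    exact (integrable_map_measure hbar_sm.aestronglyMeasurable hq_ae).mp hbar_int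
  set f : ℝ → ℝ := fun u => qf μ u - G u with hf_def
  have hf_int : Integrable f lam01 := hq_int.sub hG_int
  have hint_q : ∫ u, qf μ u ∂lam01 = ∫ x, x ∂μ := by
    calc ∫ u, qf μ u ∂lam01 = ∫ x, x ∂(lam01.map (qf μ)) :=
          (integral_map hq_ae aestronglyMeasurable_id).symm
      _ = ∫ x, x ∂μ := by rw [hmapq]
  have hint_G : ∫ u, G u ∂lam01 = ∫ y, y ∂ν := by
    rw [hG_eq]
    have h1 : ∫ u, bar (qf μ u) ∂lam01 = ∫ x, bar x ∂μ := by
      calc ∫ u, bar (qf μ u) ∂lam01 = ∫ x, bar x ∂(lam01.map (qf μ)) :=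
            (integral_map hq_ae hbar_sm.aestronglyMeasurable).symm
        _ = ∫ x, bar x ∂μ := by rw [hmapq]
    have h2 : ∫ x, bar x ∂μ = ∫ p : ℝ × ℝ, p.2 ∂(μ.compProd κ) :=
      (Measure.integral_compProd hsndc).symm
    rw [h1, h2, ← hπd, ← hπ.2]
    exact (integral_map measurable_snd.aemeasurable aestronglyMeasurable_id).symm
  have hf_zero : ∫ u, f u ∂lam01 = 0 := by
    rw [hf_def]
    rw [integral_sub hq_int hG_int, hint_q, hint_G, hmean, sub_self]
  set f0 : ℝ → ℝ := (Set.Ioo (0:ℝ) 1).indicator f with hf0_def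
  have hfIoo : IntegrableOn f (Set.Ioo 0 1) volume := hf_int
  have hf0_int : Integrable f0 volume := hfIoo.integrable_indicator measurableSet_Ioo
  set D : ℝ → ℝ := fun t => ∫ v in (0:ℝ)..t, f0 v with hD_def
  have hD_cont : Continuous D :=
    intervalIntegral.continuous_primitive (fun a b => hf0_int.intervalIntegrable) 0
  have hD0 : D 0 = 0 := intervalIntegral.integral_same
  have hDrfl : ∀ t : ℝ, D t = ∫ v in (0:ℝ)..t, f0 v := fun _ => rfl
  have hD1 : D 1 = 0 := by
    rw [hDrfl, intervalIntegral.integral_of_le one_pos.le,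
      setIntegral_congr_set (Ioo_ae_eq_Ioc (a := (0:ℝ)) (b := 1)).symm]
    have : ∫ u in Set.Ioo (0:ℝ) 1, f0 u ∂volume = ∫ u in Set.Ioo (0:ℝ) 1, f u ∂volume := by
      apply setIntegral_congr_ae measurableSet_Ioo
      filter_upwards with u hu
      exact Set.indicator_of_mem hu f
    rw [this]
    exact hf_zero
  have hae_ne : ∀ a : ℝ, ∀ᵐ v : ℝ ∂(volume : Measure ℝ), v ≠ a := ae_ne_pt
  have hfI : ∀ u ∈ Set.Icc (0:ℝ) 1, IntegrableOn f (Set.Ioc 0 u) volume := by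
    intro u hu
    have h1 : IntegrableOn f (Set.Ioo 0 u) volume :=
      hfIoo.mono_set (Set.Ioo_subset_Ioo_right hu.2)
    exact h1.congr_set_ae (Ioo_ae_eq_Ioc (a := (0:ℝ)) (b := u)).symm
  have hDeq : ∀ u ∈ Set.Icc (0:ℝ) 1, D u = ∫ v in (0:ℝ)..u, f v := by
    intro u hu
    rw [hDrfl]
    apply intervalIntegral.integral_congr_ae
    filter_upwards [hae_ne 1] with v hv1 hvmem
    rw [Set.uIoc_of_le hu.1] at hvmem
    have hv : v ∈ Set.Ioo (0:ℝ) 1 :=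
      ⟨hvmem.1, lt_of_le_of_ne (le_trans hvmem.2 hu.2) hv1⟩
    exact Set.indicator_of_mem hv f
  have hDelta : ∀ u ∈ Set.Icc (0:ℝ) 1, Δp u - Δm u = D u := by
    intro u hu
    have hplus : IntervalIntegrable (fun v => max (qf μ v - G v) 0) volume 0 u := by
      rw [intervalIntegrable_iff_integrableOn_Ioc_of_le hu.1]
      exact (hfI u hu).pos_part
    have hminus : IntervalIntegrable (fun v => max (G v - qf μ v) 0) volume 0 u := by
      rw [intervalIntegrable_iff_integrableOn_Ioc_of_le hu.1]
      have := (hfI u hu).neg.pos_part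
      simp [hf_def, neg_sub] at this; exact this
    rw [hΔp u, hΔm u, ← intervalIntegral.integral_sub hplus hminus, hDeq u hu]
    apply intervalIntegral.integral_congr
    intro v _
    have : max (qf μ v - G v) 0 - max (-(qf μ v - G v)) 0 = qf μ v - G v :=
      max_zero_sub_max_neg_zero_eq_self _
    simpa [neg_sub] using this
  set c : ℝ → ℝ := fun a => sInf (insert 1 {u | u ∈ Set.Ioo (0:ℝ) 1 ∧ a ≤ qf μ u}) with hc_def
  have hsub : ∀ a : ℝ, {u | u ∈ Set.Ioo (0:ℝ) 1 ∧ a ≤ qf μ u} ⊆ Set.Ioo 0 1 :=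
    fun a u hu => hu.1
  have hc_mem : ∀ a, c a ∈ Set.Icc (0:ℝ) 1 := by
    intro a
    constructor
    · apply le_csInf (Set.insert_nonempty _ _)
      rintro b (rfl | hb)
      · norm_num
      · exact hb.1.1.le
    · exact csInf_le (bdd_insert_one (hsub a)) (Set.mem_insert _ _)
  have hkey : ∀ a, ∫ x in Set.Ici a, (x - bar x) ∂μ = - D (c a) := by
    intro a
    have hsm : AEStronglyMeasurable ((Set.Ici a).indicator (fun x => x - bar x)) μ :=
      ((stronglyMeasurable_id.sub hbar_sm).indicator measurableSet_Ici).aestronglyMeasurable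
    rw [← integral_indicator measurableSet_Ici]
    rw [← hmapq] at hsm
    rw [← hmapq, integral_map hq_ae hsm]
    have hpt : ∀ u ∈ Set.Ioo (0:ℝ) 1, u ≠ c a →
        (Set.Ici a).indicator (fun x => x - bar x) (qf μ u)
          = (Set.Ioo (c a) 1).indicator f u := by
      intro u hu hne
      rcases lt_or_gt_of_ne hne with hlt | hgt
      · have hqa : ¬ a ≤ qf μ u := by
          intro hqa
          have : c a ≤ u :=
            csInf_le (bdd_insert_one (hsub a)) (Set.mem_insert_of_mem _ ⟨hu, hqa⟩)
          exact absurd this (not_le.2 hlt)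
        rw [Set.indicator_of_notMem (by simpa using hqa),
          Set.indicator_of_notMem (fun h => absurd h.1 (not_lt.2 hlt.le))]
      · have hmem : a ≤ qf μ u := by
          obtain ⟨s, hs, hsu⟩ := exists_lt_of_csInf_lt (Set.insert_nonempty _ _) hgt
          rcases hs with rfl | hs
          · exact absurd hsu (not_lt.2 hu.2.le)
          · exact le_trans hs.2 (qf_monoOn hs.1 hu hsu.le)
        rw [Set.indicator_of_mem (Set.mem_Ici.2 hmem), Set.indicator_of_mem (Set.mem_Ioo.2 ⟨hgt, hu.2⟩)]
        show qf μ u - bar (qf μ u) = qf μ u - G u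
        rw [hG u]
    have hstep : ∫ u, (Set.Ici a).indicator (fun x => x - bar x) (qf μ u) ∂lam01
        = ∫ u in Set.Ioo (0:ℝ) 1, (Set.Ioo (c a) 1).indicator f u ∂volume := by
      apply setIntegral_congr_ae measurableSet_Ioo
      filter_upwards [hae_ne (c a)] with u hne hu
      exact hpt u hu hne
    rw [hstep, setIntegral_indicator measurableSet_Ioo]
    have hinter : Set.Ioo (0:ℝ) 1 ∩ Set.Ioo (c a) 1 = Set.Ioo (c a) 1 := by
      rw [Set.inter_eq_right]
      intro v hv
      exact ⟨lt_of_le_of_lt (hc_mem a).1 hv.1, hv.2⟩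
    rw [hinter]
    have hIb : ∫ u in Set.Ioo (c a) 1, f u ∂volume = ∫ v in (c a)..(1:ℝ), f0 v := by
      rw [intervalIntegral.integral_of_le (hc_mem a).2,
        setIntegral_congr_set (Ioo_ae_eq_Ioc (a := c a) (b := (1:ℝ)))]
      apply setIntegral_congr_ae measurableSet_Ioc
      filter_upwards [hae_ne 1] with v hv1 hv
      exact (Set.indicator_of_mem
        (Set.mem_Ioo.2 ⟨lt_of_le_of_lt (hc_mem a).1 hv.1, lt_of_le_of_ne hv.2 hv1⟩) f).symm
    rw [hIb]
    have hadj := intervalIntegral.integral_add_adjacent_intervals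
      (a := (0:ℝ)) (b := c a) (c := (1:ℝ))
      (hf0_int.intervalIntegrable) (hf0_int.intervalIntegrable)
    have hD1' : (∫ v in (0:ℝ)..(1:ℝ), f0 v) = 0 := hD1
    have hDca : (∫ v in (0:ℝ)..(c a), f0 v) = D (c a) := (hDrfl _).symm
    linarith [hadj, hD1', hDca]
  constructor
  · intro h u hu
    suffices h0 : 0 ≤ D u by
      have := hDelta u hu
      linarith
    rcases eq_or_lt_of_le hu.1 with h0 | h0
    · rw [← h0, hD0]
    rcases eq_or_lt_of_le hu.2 with h1 | h1
    · rw [h1, hD1]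
    have huo : u ∈ Set.Ioo (0:ℝ) 1 := ⟨h0, h1⟩
    have hDc : ∀ b, 0 ≤ D (c b) := by
      intro b
      have h1 := hkey b
      have h2 := h b
      linarith
    set T : Set ℝ := {v | v ∈ Set.Ioo (0:ℝ) 1 ∧ qf μ u < qf μ v} with hT_def
    have hTsub : T ⊆ Set.Ioo 0 1 := fun v hv => hv.1
    set d : ℝ := sInf (insert 1 T) with hd_def
    have hud : u ≤ d := by
      rw [hd_def]
      apply le_csInf (Set.insert_nonempty _ _)
      rintro v (rfl | hv)
      · exact huo.2.le
      · by_contra hvu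
        push_neg at hvu
        exact absurd (qf_monoOn hv.1 huo hvu.le) (not_le.2 hv.2)
    have hd1 : d ≤ 1 := csInf_le (bdd_insert_one hTsub) (Set.mem_insert _ _)
    have hcu : c (qf μ u) ≤ u :=
      csInf_le (bdd_insert_one (hsub _)) (Set.mem_insert_of_mem _ ⟨huo, le_refl _⟩)
    have hflat : ∀ v ∈ Set.Ioo (c (qf μ u)) d, v ∈ Set.Ioo (0:ℝ) 1 ∧ qf μ v = qf μ u := by
      intro v hv
      have hv01 : v ∈ Set.Ioo (0:ℝ) 1 :=
        ⟨lt_of_le_of_lt (hc_mem _).1 hv.1, lt_of_lt_of_le hv.2 hd1⟩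
      refine ⟨hv01, le_antisymm ?_ ?_⟩
      · by_contra hgt
        push_neg at hgt
        have : d ≤ v := csInf_le (bdd_insert_one hTsub) (Set.mem_insert_of_mem _ ⟨hv01, hgt⟩)
        exact absurd this (not_le.2 hv.2)
      · obtain ⟨s, hs, hsv⟩ := exists_lt_of_csInf_lt (Set.insert_nonempty _ _) hv.1
        rcases hs with rfl | hs
        · exact absurd hsv (not_lt.2 hv01.2.le)
        · exact le_trans hs.2 (qf_monoOn hs.1 hv01 hsv.le)
    -- sequence of cut points converging to d
    set cseq : ℕ → ℝ := fun n => c (qf μ u + 1 / (n + 1)) with hcseq_def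
    have hc_mono : ∀ a a' : ℝ, a ≤ a' → c a ≤ c a' := by
      intro a a' haa
      apply csInf_le_csInf (bdd_insert_one (hsub a)) (Set.insert_nonempty _ _)
      apply Set.insert_subset_insert
      exact fun v hv => ⟨hv.1, le_trans haa hv.2⟩
    have hcseq_anti : Antitone cseq := by
      intro n m hnm
      apply hc_mono
      have h1 : (0:ℝ) < n + 1 := by positivity
      have h2 : (n:ℝ) + 1 ≤ (m:ℝ) + 1 := by
        have : (n:ℝ) ≤ m := Nat.cast_le.mpr hnm
        linarith
      have := one_div_le_one_div_of_le h1 h2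
      linarith
    have hd_le : ∀ n, d ≤ cseq n := by
      intro n
      apply csInf_le_csInf (bdd_insert_one hTsub) (Set.insert_nonempty _ _)
      apply Set.insert_subset_insert
      intro v hv
      refine ⟨hv.1, lt_of_lt_of_le ?_ hv.2⟩
      have : (0:ℝ) < 1 / ((n:ℝ) + 1) := by positivity
      linarith
    have hbdd_range : BddBelow (Set.range cseq) := by
      refine ⟨d, ?_⟩
      rintro _ ⟨n, rfl⟩
      exact hd_le n
    have hiInf : (⨅ n, cseq n) = d := by
      apply le_antisymm
      · rw [hd_def]
        apply le_csInf (Set.insert_nonempty _ _)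
        rintro v (rfl | hv)
        · exact ciInf_le_of_le hbdd_range 0 (hc_mem _).2
        · obtain ⟨n, hn⟩ := exists_nat_one_div_lt (sub_pos.2 hv.2)
          refine ciInf_le_of_le hbdd_range n ?_
          apply csInf_le (bdd_insert_one (hsub _))
          exact Set.mem_insert_of_mem _ ⟨hv.1, by linarith⟩
      · exact le_ciInf hd_le
    have htend : Tendsto cseq atTop (𝓝 d) := by
      rw [← hiInf]
      exact tendsto_atTop_ciInf hcseq_anti hbdd_range
    have hDd : 0 ≤ D d :=
      ge_of_tendsto' ((hD_cont.tendsto d).comp htend) (fun n => hDc _)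
    set K : ℝ := qf μ u - G u with hK_def
    have hconst : ∀ s t : ℝ, c (qf μ u) ≤ s → s ≤ t → t ≤ d →
        (∫ v in s..t, f0 v) = (t - s) * K := by
      intro s t hcs hst htd
      have : (∫ v in s..t, f0 v) = ∫ v in s..t, K := by
        apply intervalIntegral.integral_congr_ae
        filter_upwards [hae_ne t] with v hvt hvmem
        rw [Set.uIoc_of_le hst] at hvmem
        have hv : v ∈ Set.Ioo (c (qf μ u)) d :=
          ⟨lt_of_le_of_lt hcs hvmem.1, lt_of_lt_of_le (lt_of_le_of_ne hvmem.2 hvt) htd⟩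
        obtain ⟨hv01, hqv⟩ := hflat v hv
        have hfv : f0 v = f v := Set.indicator_of_mem hv01 f
        rw [hfv]
        show qf μ v - G v = K
        rw [hK_def, hG v, hG u, hqv]
      rw [this, intervalIntegral.integral_const, smul_eq_mul]
    have hadj1 := intervalIntegral.integral_add_adjacent_intervals
      (a := (0:ℝ)) (b := c (qf μ u)) (c := u)
      (hf0_int.intervalIntegrable) (hf0_int.intervalIntegrable)
    have hadj2 := intervalIntegral.integral_add_adjacent_intervals
      (a := (0:ℝ)) (b := u) (c := d)
      (hf0_int.intervalIntegrable) (hf0_int.intervalIntegrable)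
    have e1 : D u = D (c (qf μ u)) + (u - c (qf μ u)) * K := by
      have h1 := hconst (c (qf μ u)) u (le_refl _) hcu hud
      rw [hDrfl u, hDrfl (c (qf μ u))]
      linarith [hadj1, h1]
    have e2 : D d = D u + (d - u) * K := by
      have h1 := hconst u d hcu hud (le_refl _)
      rw [hDrfl d, hDrfl u]
      linarith [hadj2, h1]
    rcases le_or_gt 0 K with hK | hK
    · have h1 := hDc (qf μ u)
      nlinarith [mul_nonneg (sub_nonneg.2 hcu) hK]
    · nlinarith [mul_nonpos_of_nonneg_of_nonpos (sub_nonneg.2 hud) hK.le]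
  · intro h a
    rw [hkey a]
    have h1 := h (c a) (hc_mem a)
    have h2 := hDelta (c a) (hc_mem a)
    linarith

end Main
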